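/- Let p > 2, r > 0, c ∈ ℝ, and set δ = r·(1 − 2/p), P = {r² + z² : z ∈ ℂ, |Im z| ≤ δ}, S′ = {w ∈ ℂ : Re w > 0 and 0 < Im w < δ}, and Ω′ = interior(P − c) ∩ {z ∈ ℂ : Im z > 0}, where P − c = {w − c : w ∈ P}. Then the map g(w) = w² + r² − c is an injective holomorphic map from S′ onto Ω′; in particular Ω′ is an open connected subset of ℂ, and if c > c_p := (4r²/p)·(1 − 1/p) then Ω′ ∩ iℝ ≠ ∅. -/

import Mathlib

set_option maxHeartbeats 1000000

/-- Explicit square root of `u + v i` with controlled imaginary part. -/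
lemma aux_sqrt_construct (u v : ℝ) :
    ∃ x y : ℝ, x ^ 2 - y ^ 2 = u ∧ 2 * x * y = v ∧
      2 * y ^ 2 = Real.sqrt (u ^ 2 + v ^ 2) - u ∧ 0 ≤ y ∧ (0 < v → 0 < x ∧ 0 < y) := by
  set s := Real.sqrt (u ^ 2 + v ^ 2) with hs
  have hs0 : 0 ≤ s := Real.sqrt_nonneg _
  have hssq : s ^ 2 = u ^ 2 + v ^ 2 := Real.sq_sqrt (by positivity)
  have hsu : |u| ≤ s := by
    rw [← Real.sqrt_sq_eq_abs, hs]
    exact Real.sqrt_le_sqrt (by nlinarith [sq_nonneg v])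
  have hu1 : u ≤ s := (le_abs_self u).trans hsu
  have hu2 : -s ≤ u := by have := neg_abs_le u; linarith
  have h1 : 0 ≤ (s - u) / 2 := by linarith
  have h2 : 0 ≤ (s + u) / 2 := by linarith
  set y := Real.sqrt ((s - u) / 2) with hydef
  set x0 := Real.sqrt ((s + u) / 2) with hxdef
  have hy0 : 0 ≤ y := Real.sqrt_nonneg _
  have hx00 : 0 ≤ x0 := Real.sqrt_nonneg _
  have hy2 : y ^ 2 = (s - u) / 2 := Real.sq_sqrt h1
  have hx2 : x0 ^ 2 = (s + u) / 2 := Real.sq_sqrt h2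
  have hsq : (2 * x0 * y) ^ 2 = v ^ 2 := by
    linear_combination (4 * y ^ 2) * hx2 + (2 * (s + u)) * hy2 + hssq
  have habs : 2 * x0 * y = |v| := by
    have hnn : 0 ≤ 2 * x0 * y := by positivity
    have h2' : Real.sqrt ((2 * x0 * y) ^ 2) = Real.sqrt (v ^ 2) := by rw [hsq]
    rwa [Real.sqrt_sq hnn, Real.sqrt_sq_eq_abs] at h2'
  refine ⟨if 0 ≤ v then x0 else -x0, y, ?_, ?_, ?_, hy0, ?_⟩
  · split_ifs <;> linear_combination hx2 - hy2
  · split_ifs with h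
    · rw [abs_of_nonneg h] at habs; linarith
    · rw [abs_of_neg (not_le.mp h)] at habs; linarith
  · rw [hy2]; ring
  · intro hv
    rw [if_pos hv.le]
    have hxyv : 2 * x0 * y = v := by rw [habs, abs_of_pos hv]
    constructor <;> nlinarith [hxyv, hx00, hy0, hv]

set_option maxHeartbeats 1600000 in
theorem higher_rank_change_of_variables
    (p r c : ℝ) (hp : 2 < p) (hr : 0 < r)
    (δ : ℝ) (hδ : δ = r * (1 - 2 / p))
    (P : Set ℂ) (hP : P = {w : ℂ | ∃ z : ℂ, |z.im| ≤ δ ∧ w = (r : ℂ) ^ 2 + z ^ 2})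
    (S' : Set ℂ) (hS' : S' = {w : ℂ | 0 < w.re ∧ 0 < w.im ∧ w.im < δ})
    (Ω' : Set ℂ)
    (hΩ' : Ω' = interior ((fun w => w - (c : ℂ)) '' P) ∩ {z : ℂ | 0 < z.im})
    (g : ℂ → ℂ) (hg : g = fun w => w ^ 2 + (r : ℂ) ^ 2 - (c : ℂ)) :
    Set.InjOn g S' ∧ DifferentiableOn ℂ g S' ∧ g '' S' = Ω' ∧
      IsOpen Ω' ∧ IsConnected Ω' ∧
      (4 * r ^ 2 / p * (1 - 1 / p) < c →
        ∃ y : ℝ, Complex.I * (y : ℂ) ∈ Ω') := by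
  have hp0 : 0 < p := by linarith
  have hδ0 : 0 < δ := by
    rw [hδ]
    have h2p : 2 / p < 1 := (div_lt_one hp0).2 hp
    have : 0 < 1 - 2 / p := by linarith
    positivity
  -- Characterization of P
  have hPchar : ∀ w : ℂ, w ∈ P ↔ w.im ^ 2 ≤ 4 * δ ^ 2 * (w.re - r ^ 2 + δ ^ 2) := by
    intro w
    rw [hP]
    constructor
    · rintro ⟨z, hz, rfl⟩
      have him2 : z.im ^ 2 ≤ δ ^ 2 := by
        nlinarith [sq_abs z.im, abs_nonneg z.im]
      simp only [Complex.add_re, Complex.add_im, pow_two, Complex.mul_re, Complex.mul_im,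
        Complex.ofReal_re, Complex.ofReal_im]
      nlinarith [sq_nonneg z.re, mul_nonneg (sub_nonneg.2 him2)
        (add_nonneg (mul_self_nonneg z.re) (mul_self_nonneg δ))]
    · intro hw
      obtain ⟨x, y, hxy, h2xy, hy2, hy0, -⟩ := aux_sqrt_construct (w.re - r ^ 2) w.im
      set s := Real.sqrt ((w.re - r ^ 2) ^ 2 + w.im ^ 2) with hsdef
      have hs0 : 0 ≤ s := Real.sqrt_nonneg _
      have hssq : s ^ 2 = (w.re - r ^ 2) ^ 2 + w.im ^ 2 := Real.sq_sqrt (by positivity)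
      have hδ2 : 0 < δ ^ 2 := pow_pos hδ0 2
      have hupos : 0 ≤ w.re - r ^ 2 + δ ^ 2 := by nlinarith [sq_nonneg w.im, hw, hδ2]
      have hsle : s ≤ (w.re - r ^ 2) + 2 * δ ^ 2 := by nlinarith [hssq, hs0]
      have hyδ : |y| ≤ δ := by
        have : y ^ 2 ≤ δ ^ 2 := by nlinarith
        rw [← Real.sqrt_sq_eq_abs, ← Real.sqrt_sq hδ0.le]
        exact Real.sqrt_le_sqrt this
      refine ⟨(x : ℂ) + (y : ℂ) * Complex.I, ?_, ?_⟩
      · simpa using hyδ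
      · apply Complex.ext <;>
          simp only [Complex.add_re, Complex.add_im, pow_two, Complex.mul_re, Complex.mul_im,
            Complex.ofReal_re, Complex.ofReal_im, Complex.I_re, Complex.I_im] <;> nlinarith
  -- translated set
  have hT : ((fun w => w - (c : ℂ)) '' P) =
      {w : ℂ | w.im ^ 2 ≤ 4 * δ ^ 2 * (w.re + c - r ^ 2 + δ ^ 2)} := by
    ext w
    constructor
    · rintro ⟨a, ha, rfl⟩
      have := (hPchar a).1 ha
      simp only [Set.mem_setOf_eq, Complex.sub_re, Complex.sub_im, Complex.ofReal_re,
        Complex.ofReal_im]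
      nlinarith [this]
    · intro hw
      simp only [Set.mem_setOf_eq] at hw
      refine ⟨w + (c : ℂ), (hPchar _).2 ?_, by ring⟩
      simp only [Complex.add_re, Complex.add_im, Complex.ofReal_re, Complex.ofReal_im]
      nlinarith [hw]
  -- interior
  have hUopen : IsOpen {w : ℂ | w.im ^ 2 < 4 * δ ^ 2 * (w.re + c - r ^ 2 + δ ^ 2)} := by
    have hc1 : Continuous fun w : ℂ => w.im ^ 2 := Complex.continuous_im.pow 2
    have hc2 : Continuous fun w : ℂ => 4 * δ ^ 2 * (w.re + c - r ^ 2 + δ ^ 2) := by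
      exact continuous_const.mul (((Complex.continuous_re.add continuous_const).sub
        continuous_const).add continuous_const)
    exact isOpen_lt hc1 hc2
  have hU : interior ((fun w => w - (c : ℂ)) '' P) =
      {w : ℂ | w.im ^ 2 < 4 * δ ^ 2 * (w.re + c - r ^ 2 + δ ^ 2)} := by
    rw [hT]
    apply le_antisymm
    · intro w hw
      rw [mem_interior_iff_mem_nhds, Metric.mem_nhds_iff] at hw
      obtain ⟨ε, hε, hball⟩ := hw
      have hmem : w - ((ε / 2 : ℝ) : ℂ) ∈ Metric.ball w ε := by
        simp only [Metric.mem_ball, Complex.dist_eq]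
        have : w - ((ε / 2 : ℝ) : ℂ) - w = -((ε / 2 : ℝ) : ℂ) := by ring
        rw [this, norm_neg, Complex.norm_real, Real.norm_eq_abs, abs_of_pos (by linarith)]
        linarith
      have := hball hmem
      simp only [Set.mem_setOf_eq, Complex.sub_re, Complex.sub_im, Complex.ofReal_re,
        Complex.ofReal_im] at this ⊢
      nlinarith [mul_pos (mul_pos (show (0:ℝ) < 4 by norm_num) (pow_pos hδ0 2))
        (half_pos hε)]
    · apply interior_maximal _ hUopen
      intro w hw
      simp only [Set.mem_setOf_eq] at hw ⊢
      linarith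
  have hΩeq : Ω' = {w : ℂ | 0 < w.im ∧ w.im ^ 2 < 4 * δ ^ 2 * (w.re + c - r ^ 2 + δ ^ 2)} := by
    rw [hΩ', hU]
    ext w
    simp only [Set.mem_inter_iff, Set.mem_setOf_eq]
    tauto
  -- image
  have himg : g '' S' = Ω' := by
    rw [hΩeq]
    ext w
    constructor
    · rintro ⟨z, hz, rfl⟩
      rw [hS'] at hz
      obtain ⟨hx, hy, hyδ⟩ := hz
      rw [hg]
      simp only [Set.mem_setOf_eq, Complex.sub_re, Complex.sub_im, Complex.add_re,
        Complex.add_im, pow_two, Complex.mul_re, Complex.mul_im, Complex.ofReal_re,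
        Complex.ofReal_im]
      constructor
      · nlinarith [mul_pos hx hy]
      · nlinarith [mul_pos (show 0 < δ ^ 2 - z.im ^ 2 by nlinarith)
          (show 0 < z.re ^ 2 + δ ^ 2 by positivity)]
    · rintro ⟨hv, hlt⟩
      obtain ⟨x, y, hxy, h2xy, hy2, hy0, hpos⟩ := aux_sqrt_construct (w.re + c - r ^ 2) w.im
      obtain ⟨hx, hy⟩ := hpos hv
      set s := Real.sqrt ((w.re + c - r ^ 2) ^ 2 + w.im ^ 2) with hsdef
      have hs0 : 0 ≤ s := Real.sqrt_nonneg _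
      have hssq : s ^ 2 = (w.re + c - r ^ 2) ^ 2 + w.im ^ 2 := Real.sq_sqrt (by positivity)
      have hupos : 0 < w.re + c - r ^ 2 + δ ^ 2 := by nlinarith [sq_nonneg w.im]
      have hsle : s < (w.re + c - r ^ 2) + 2 * δ ^ 2 := by nlinarith [hssq, hs0]
      have hyδ : y < δ := by nlinarith
      refine ⟨(x : ℂ) + (y : ℂ) * Complex.I, ?_, ?_⟩
      · rw [hS']
        refine ⟨?_, ?_, ?_⟩ <;>
          simp only [Complex.add_re, Complex.add_im, Complex.mul_re, Complex.mul_im,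
            Complex.ofReal_re, Complex.ofReal_im, Complex.I_re, Complex.I_im] <;> nlinarith
      · rw [hg]
        apply Complex.ext <;>
          simp only [Complex.sub_re, Complex.sub_im, Complex.add_re, Complex.add_im,
            pow_two, Complex.mul_re, Complex.mul_im, Complex.ofReal_re, Complex.ofReal_im,
            Complex.I_re, Complex.I_im] <;> nlinarith
  -- injective
  have hinj : Set.InjOn g S' := by
    intro z hz z' hz' hgz
    rw [hS'] at hz hz'
    rw [hg] at hgz
    simp only at hgz
    have hzz : (z - z') * (z + z') = 0 := by linear_combination hgz
    rcases mul_eq_zero.1 hzz with h | h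
    · exact sub_eq_zero.1 h
    · exfalso
      have := congrArg Complex.re h
      simp only [Complex.add_re, Complex.zero_re] at this
      linarith [hz.1, hz'.1]
  -- differentiable
  have hdiff : DifferentiableOn ℂ g S' := by
    rw [hg]
    exact (((differentiable_id.pow 2).add_const _).sub_const _).differentiableOn
  -- open
  have hopen : IsOpen Ω' := by
    rw [hΩeq, Set.setOf_and]
    exact (isOpen_lt continuous_const Complex.continuous_im).inter hUopen
  -- connected
  have hScvx : Convex ℝ S' := by
    have : S' = {w : ℂ | 0 < w.re} ∩ ({w : ℂ | 0 < w.im} ∩ {w : ℂ | w.im < δ}) := by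
      rw [hS']; ext w; simp [Set.mem_inter_iff, Set.mem_setOf_eq]
    rw [this]
    exact (convex_halfSpace_re_gt 0).inter
      ((convex_halfSpace_im_gt 0).inter (convex_halfSpace_im_lt δ))
  have hSne : S'.Nonempty := by
    refine ⟨⟨1, δ / 2⟩, ?_⟩
    rw [hS']
    refine ⟨?_, ?_, ?_⟩
    · show (0 : ℝ) < 1; norm_num
    · show (0 : ℝ) < δ / 2; linarith
    · show δ / 2 < δ; linarith
  have hconn : IsConnected Ω' := by
    rw [← himg]
    exact ((hScvx.isConnected hSne).image g hdiff.continuousOn)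
  refine ⟨hinj, hdiff, himg, hopen, hconn, ?_⟩
  intro hc
  have hcp : r ^ 2 - δ ^ 2 = 4 * r ^ 2 / p * (1 - 1 / p) := by
    rw [hδ]; field_simp; ring
  have hε : 0 < c - (r ^ 2 - δ ^ 2) := by rw [hcp]; linarith
  refine ⟨δ * Real.sqrt (c - (r ^ 2 - δ ^ 2)), ?_⟩
  rw [hΩeq]
  have hsε : Real.sqrt (c - (r ^ 2 - δ ^ 2)) ^ 2 = c - (r ^ 2 - δ ^ 2) := Real.sq_sqrt hε.le
  have hsε0 : 0 < Real.sqrt (c - (r ^ 2 - δ ^ 2)) := Real.sqrt_pos.2 hε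
  have hval : (δ * Real.sqrt (c - (r ^ 2 - δ ^ 2))) ^ 2 = δ ^ 2 * (c - (r ^ 2 - δ ^ 2)) := by
    rw [mul_pow, hsε]
  simp only [Set.mem_setOf_eq, Complex.mul_re, Complex.mul_im, Complex.I_re, Complex.I_im,
    Complex.ofReal_re, Complex.ofReal_im]
  constructor
  · nlinarith [mul_pos hδ0 hsε0]
  · nlinarith [hval, mul_pos (pow_pos hδ0 2) hε]
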